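/- Let F ⊆ P_{a1⊕a2}(X1×X2) be a totally C-cyclically monotone set. Then every π ∈ F is a c-optimal coupling between its marginals, i.e. ∫ c dπ = C(pr¹_♯π, pr²_♯π). -/

import Mathlib

open MeasureTheory Topology ENNReal Set

noncomputable section

namespace OTRM

noncomputable instance instMSPM {X : Type*} [MeasurableSpace X] [TopologicalSpace X]
    [OpensMeasurableSpace X] : MeasurableSpace (ProbabilityMeasure X) := borel _

instance instBSPM {X : Type*} [MeasurableSpace X] [TopologicalSpace X]
    [OpensMeasurableSpace X] : BorelSpace (ProbabilityMeasure X) := ⟨rfl⟩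

variable {X1 X2 : Type*}
  [MeasurableSpace X1] [TopologicalSpace X1] [BorelSpace X1] [PolishSpace X1]
  [MeasurableSpace X2] [TopologicalSpace X2] [BorelSpace X2] [PolishSpace X2]

def Coupling {Y1 Y2 : Type*} [MeasurableSpace Y1] [MeasurableSpace Y2]
    (μ1 : ProbabilityMeasure Y1) (μ2 : ProbabilityMeasure Y2) :
    Set (ProbabilityMeasure (Y1 × Y2)) :=
  {π | (π : Measure (Y1 × Y2)).map Prod.fst = (μ1 : Measure Y1) ∧
       (π : Measure (Y1 × Y2)).map Prod.snd = (μ2 : Measure Y2)}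

def transportCost (c : X1 × X2 → ℝ≥0∞) (π : ProbabilityMeasure (X1 × X2)) : ℝ≥0∞ :=
  ∫⁻ p, c p ∂(π : Measure (X1 × X2))

def OTCost (c : X1 × X2 → ℝ≥0∞) (μ1 : ProbabilityMeasure X1) (μ2 : ProbabilityMeasure X2) :
    ℝ≥0∞ :=
  ⨅ π ∈ Coupling μ1 μ2, transportCost c π

/-- First marginal of a transport plan. -/
def margFst (π : ProbabilityMeasure (X1 × X2)) : ProbabilityMeasure X1 :=
  π.map measurable_fst.aemeasurable

/-- Second marginal of a transport plan. -/
def margSnd (π : ProbabilityMeasure (X1 × X2)) : ProbabilityMeasure X2 :=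
  π.map measurable_snd.aemeasurable

/-- The iterated optimal transport cost `𝒞(M1, M2)` between laws of random measures. -/
def IterOTCost (c : X1 × X2 → ℝ≥0∞)
    (M1 : ProbabilityMeasure (ProbabilityMeasure X1))
    (M2 : ProbabilityMeasure (ProbabilityMeasure X2)) : ℝ≥0∞ :=
  ⨅ P ∈ Coupling M1 M2,
    ∫⁻ p, OTCost c p.1 p.2 ∂(P : Measure (ProbabilityMeasure X1 × ProbabilityMeasure X2))

/-- The set of (laws of) random couplings between `M1` and `M2`. -/
def RandCoupling (M1 : ProbabilityMeasure (ProbabilityMeasure X1))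
    (M2 : ProbabilityMeasure (ProbabilityMeasure X2)) :
    Set (ProbabilityMeasure (ProbabilityMeasure (X1 × X2))) :=
  {P | (P : Measure (ProbabilityMeasure (X1 × X2))).map margFst
          = (M1 : Measure (ProbabilityMeasure X1)) ∧
       (P : Measure (ProbabilityMeasure (X1 × X2))).map margSnd
          = (M2 : Measure (ProbabilityMeasure X2))}


/-- The pair-marginal pushforward `(pr¹_♯, pr²_♯)_♯ P` of a random coupling. -/
def margPairLaw (P : ProbabilityMeasure (ProbabilityMeasure (X1 × X2))) :
    Measure (ProbabilityMeasure X1 × ProbabilityMeasure X2) :=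
  (P : Measure (ProbabilityMeasure (X1 × X2))).map fun π => (margFst π, margSnd π)

/-- The set of `c`-optimal couplings (between their own marginals). -/
def OptPlans (c : X1 × X2 → ℝ≥0∞) : Set (ProbabilityMeasure (X1 × X2)) :=
  {π | transportCost c π = OTCost c (margFst π) (margSnd π)}

/-- Probability measures with finite `a`-moment: `P_a(X)`. -/
def Pa {X : Type*} [MeasurableSpace X] (a : X → ℝ≥0∞) : Set (ProbabilityMeasure X) :=
  {μ | (∫⁻ x, a x ∂(μ : Measure X)) ≠ ⊤}

/-- Plans both of whose marginals have finite moments: `P_{a1 ⊕ a2}(X1 × X2)`. -/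
def PaPair (a1 : X1 → ℝ≥0∞) (a2 : X2 → ℝ≥0∞) : Set (ProbabilityMeasure (X1 × X2)) :=
  {π | margFst π ∈ Pa a1 ∧ margSnd π ∈ Pa a2}

section Kframework

variable {Y1 Y2 : Type*}

/-- `K`-concavity of `φ` relative to the domains `D1`, `D2` (Definition 2.2(2)):
`φ` is not identically `-∞` on `D1` and is, on `D1`, an infimum of functions
`y1 ↦ K(y1,y2) - α` with `y2 ∈ D2`, `α ∈ ℝ`. -/
def KConcaveOn (K : Y1 → Y2 → ℝ≥0∞) (D1 : Set Y1) (D2 : Set Y2) (φ : Y1 → EReal) : Prop :=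
  (∃ y1 ∈ D1, φ y1 ≠ ⊥) ∧
    ∃ A : Set (Y2 × ℝ), (∀ p ∈ A, p.1 ∈ D2) ∧
      ∀ y1 ∈ D1, φ y1 = ⨅ p ∈ A, ((K y1 p.1 : EReal) - (p.2 : EReal))

/-- The `K`-transform of `φ` (Definition 2.2(3)). -/
def KTransform (K : Y1 → Y2 → ℝ≥0∞) (D1 : Set Y1) (φ : Y1 → EReal) : Y2 → EReal :=
  fun y2 => ⨅ y1 ∈ D1, ((K y1 y2 : EReal) - φ y1)

/-- The `K`-superdifferential of `φ` (Definition 2.2(4)). -/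
def KSuperdiff (K : Y1 → Y2 → ℝ≥0∞) (D1 : Set Y1) (D2 : Set Y2) (φ : Y1 → EReal) :
    Set (Y1 × Y2) :=
  {p | p.1 ∈ D1 ∧ p.2 ∈ D2 ∧ φ p.1 ≠ ⊥ ∧
    ∀ y1' ∈ D1, ((K p.1 p.2 : EReal) - φ p.1) ≤ ((K y1' p.2 : EReal) - φ y1')}

/-- `K`-cyclical monotonicity of a set of pairs (Definition 2.2(1)). -/
def KCyclMono (K : Y1 → Y2 → ℝ≥0∞) (G : Set (Y1 × Y2)) : Prop :=
  ∀ (k : ℕ), 1 ≤ k → ∀ f : Fin k → Y1 × Y2, (∀ i, f i ∈ G) →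
    ∀ σ : Equiv.Perm (Fin k), (∑ i, K (f i).1 (f i).2) ≤ ∑ i, K (f i).1 (f (σ i)).2

end Kframework

/-- First marginal of a measure on `X1 × X2 × X1`. -/
def margFirst3 (θ : ProbabilityMeasure (X1 × X2 × X1)) : ProbabilityMeasure X1 :=
  θ.map measurable_fst.aemeasurable

/-- Third marginal of a measure on `X1 × X2 × X1`. -/
def margThird3 (θ : ProbabilityMeasure (X1 × X2 × X1)) : ProbabilityMeasure X1 :=
  θ.map (measurable_snd.comp measurable_snd).aemeasurable

/-- The total `C`-superdifferential of `φ` (Definition 3.4). -/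
def TotalSuperdiff (c : X1 × X2 → ℝ≥0∞) (a1 : X1 → ℝ≥0∞) (a2 : X2 → ℝ≥0∞)
    (φ : ProbabilityMeasure X1 → EReal) : Set (ProbabilityMeasure (X1 × X2)) :=
  {π | π ∈ PaPair a1 a2 ∧
    ∀ θ : ProbabilityMeasure (X1 × X2 × X1),
      (θ : Measure (X1 × X2 × X1)).map (fun p => (p.1, p.2.1)) = (π : Measure (X1 × X2)) →
      margThird3 θ ∈ Pa a1 →
      ((∫⁻ p, c (p.1, p.2.1) ∂(θ : Measure (X1 × X2 × X1)) : ℝ≥0∞) : EReal)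
          - ((∫⁻ p, c (p.2.2, p.2.1) ∂(θ : Measure (X1 × X2 × X1)) : ℝ≥0∞) : EReal)
        ≤ φ (margFirst3 θ) - φ (margThird3 θ)}

/-- Total `C`-cyclical monotonicity of a set of plans (Definition 3.5). -/
def TotallyCCyclMono (c : X1 × X2 → ℝ≥0∞) (F : Set (ProbabilityMeasure (X1 × X2))) : Prop :=
  ∀ (N : ℕ), 1 ≤ N → ∀ θ : ProbabilityMeasure (Fin N → X1 × X2),
    (∀ n : Fin N, θ.map (measurable_pi_apply n).aemeasurable ∈ F) →
    ∀ σ : Equiv.Perm (Fin N),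
      (∫⁻ ω, ∑ i, c (ω i) ∂(θ : Measure (Fin N → X1 × X2)))
        ≤ ∫⁻ ω, ∑ i, c ((ω i).1, (ω (σ i)).2) ∂(θ : Measure (Fin N → X1 × X2))


section ChainAux

open ProbabilityTheory

variable {A B C : Type*} [MeasurableSpace A] [MeasurableSpace B] [MeasurableSpace C]

lemma aux_bind_map (θ : Measure A) {f : A → B} (hf : Measurable f) (K : Kernel B C) :
    θ.bind (fun a => K (f a)) = (θ.map f).bind K := by
  simp only [Measure.bind]
  rw [Measure.map_map (Kernel.measurable K) hf]
  rfl

lemma aux_map_snd_compProd (θ : Measure A) [SFinite θ] (K : Kernel A B) [IsSFiniteKernel K] :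
    (θ ⊗ₘ K).map Prod.snd = θ.bind K := by
  ext s hs
  rw [Measure.map_apply measurable_snd hs,
    Measure.compProd_apply (measurable_snd hs),
    Measure.bind_apply hs (Kernel.measurable K).aemeasurable]
  rfl

lemma aux_compProd_comap_map (θ : Measure A) [SFinite θ] {f : A → B} (hf : Measurable f)
    (K : Kernel B C) [IsSFiniteKernel K] :
    ((θ ⊗ₘ (K.comap f hf)).map fun p => (f p.1, p.2)) = (θ.map f) ⊗ₘ K := by
  have hmeas : Measurable fun p : A × C => (f p.1, p.2) :=
    (hf.comp measurable_fst).prodMk measurable_snd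
  ext s hs
  rw [Measure.map_apply hmeas hs,
    Measure.compProd_apply (hs.preimage hmeas),
    Measure.compProd_apply hs,
    lintegral_map (Kernel.measurable_kernel_prodMk_left hs) hf]
  refine lintegral_congr fun a => ?_
  rw [Kernel.comap_apply]
  rfl

/-- The function appending a value to a finite trajectory. -/
noncomputable def snocFun (n : ℕ) (p : (Fin (n + 1) → A) × A) : Fin (n + 2) → A :=
  Fin.snoc p.1 p.2

lemma measurable_snocFun (n : ℕ) : Measurable (snocFun (A := A) n) := by
  refine measurable_pi_iff.2 fun i => ?_
  induction i using Fin.lastCases with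
  | last => simpa [snocFun, Fin.snoc_last] using measurable_snd
  | cast j =>
    simp only [snocFun, Fin.snoc_castSucc]
    exact (measurable_pi_apply j).comp measurable_fst

/-- The Markov chain of length `n+1` started at `μ` with transition kernel `K`. -/
noncomputable def mchain (μ : Measure A) (K : Kernel A A) : (n : ℕ) → Measure (Fin (n + 1) → A)
  | 0 => μ.map (fun z _ => z)
  | n + 1 =>
      ((mchain μ K n) ⊗ₘ (K.comap (fun ω => ω (Fin.last n)) (measurable_pi_apply _))).map
        (snocFun n)

instance mchain_isProbabilityMeasure (μ : Measure A) [IsProbabilityMeasure μ] (K : Kernel A A)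
    [IsMarkovKernel K] (n : ℕ) : IsProbabilityMeasure (mchain μ K n) := by
  induction n with
  | zero =>
    rw [mchain]
    exact Measure.isProbabilityMeasure_map (measurable_pi_lambda _ fun _ => measurable_id).aemeasurable
  | succ n ih =>
    rw [mchain]
    exact Measure.isProbabilityMeasure_map (measurable_snocFun n).aemeasurable

lemma mchain_map_eval (μ : Measure A) [IsProbabilityMeasure μ] (K : Kernel A A) [IsMarkovKernel K]
    (hinv : μ.bind K = μ) :
    ∀ (n : ℕ) (i : Fin (n + 1)), (mchain μ K n).map (fun ω => ω i) = μ := by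
  intro n
  induction n with
  | zero =>
    intro i
    have hm : Measurable (fun (z : A) (_ : Fin (0 + 1)) => z) :=
      measurable_pi_lambda _ fun _ => measurable_id
    rw [mchain, Measure.map_map (measurable_pi_apply i) hm]
    exact Measure.map_id
  | succ n ih =>
    intro i
    rw [mchain, Measure.map_map (measurable_pi_apply i) (measurable_snocFun n)]
    induction i using Fin.lastCases with
    | last =>
      have hcomp : ((fun ω => ω (Fin.last (n + 1))) ∘ (snocFun (A := A) n)) = Prod.snd := by
        funext p; simp [snocFun, Fin.snoc_last]
      rw [hcomp, aux_map_snd_compProd]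
      have hco : (⇑(K.comap (fun ω : Fin (n + 1) → A => ω (Fin.last n))
          (measurable_pi_apply _))) = fun ω : Fin (n + 1) → A => K (ω (Fin.last n)) :=
        funext fun ω => Kernel.comap_apply _ _ _
      have hb := aux_bind_map (mchain μ K n)
        (f := fun ω : Fin (n + 1) → A => ω (Fin.last n)) (measurable_pi_apply _) K
      rw [hco, hb, ih (Fin.last n), hinv]
    | cast j =>
      have hcomp : ((fun ω => ω (Fin.castSucc j)) ∘ (snocFun (A := A) n))
          = (fun ω : Fin (n + 1) → A => ω j) ∘ Prod.fst := by
        funext p; simp [snocFun, Fin.snoc_castSucc]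
      rw [hcomp, ← Measure.map_map (measurable_pi_apply j) measurable_fst]
      rw [show ((mchain μ K n ⊗ₘ K.comap (fun ω : Fin (n + 1) → A => ω (Fin.last n))
          (measurable_pi_apply _)).map Prod.fst)
          = (mchain μ K n ⊗ₘ K.comap (fun ω : Fin (n + 1) → A => ω (Fin.last n))
          (measurable_pi_apply _)).fst from rfl]
      rw [Measure.fst_compProd, ih j]

lemma mchain_pair_last (μ : Measure A) [IsProbabilityMeasure μ] (K : Kernel A A)
    [IsMarkovKernel K] (hinv : μ.bind K = μ) (n : ℕ) :
    (mchain μ K (n + 1)).map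
      (fun ω => (ω (Fin.last n).castSucc, ω (Fin.last n).succ)) = μ ⊗ₘ K := by
  have hpair : Measurable fun ω : Fin (n + 2) → A =>
      (ω (Fin.last n).castSucc, ω (Fin.last n).succ) :=
    (measurable_pi_apply _).prodMk (measurable_pi_apply _)
  rw [mchain, Measure.map_map hpair (measurable_snocFun n)]
  have hcomp : ((fun ω => (ω (Fin.last n).castSucc, ω (Fin.last n).succ))
        ∘ (snocFun (A := A) n))
      = fun p : (Fin (n + 1) → A) × A => (p.1 (Fin.last n), p.2) := by
    funext p
    simp [snocFun, Fin.succ_last, Fin.snoc_last, Fin.snoc_castSucc]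
  rw [hcomp]
  have h2 : (mchain μ K n ⊗ₘ K.comap (fun ω : Fin (n + 1) → A => ω (Fin.last n))
        (measurable_pi_apply _)).map (fun p => (p.1 (Fin.last n), p.2))
      = ((mchain μ K n).map (fun ω => ω (Fin.last n))) ⊗ₘ K :=
    aux_compProd_comap_map (mchain μ K n) (measurable_pi_apply (Fin.last n)) K
  rw [h2, mchain_map_eval μ K hinv n (Fin.last n)]

lemma mchain_map_pair (μ : Measure A) [IsProbabilityMeasure μ] (K : Kernel A A)
    [IsMarkovKernel K] (hinv : μ.bind K = μ) :
    ∀ (n : ℕ) (j : Fin (n + 1)),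
      (mchain μ K (n + 1)).map (fun ω => (ω j.castSucc, ω j.succ)) = μ ⊗ₘ K := by
  intro n
  induction n with
  | zero =>
    intro j
    have hj : j = Fin.last 0 := by omega
    rw [hj]
    exact mchain_pair_last μ K hinv 0
  | succ n ih =>
    intro j
    induction j using Fin.lastCases with
    | last => exact mchain_pair_last μ K hinv (n + 1)
    | cast k =>
      have hpair : Measurable fun ω : Fin (n + 3) → A =>
          (ω k.castSucc.castSucc, ω k.castSucc.succ) :=
        (measurable_pi_apply _).prodMk (measurable_pi_apply _)
      rw [show mchain μ K (n + 2) = ((mchain μ K (n + 1)) ⊗ₘ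
          (K.comap (fun ω : Fin (n + 2) → A => ω (Fin.last (n + 1)))
            (measurable_pi_apply _))).map (snocFun (n + 1)) from rfl,
        Measure.map_map hpair (measurable_snocFun (n + 1))]
      have hcomp : ((fun ω => (ω k.castSucc.castSucc, ω k.castSucc.succ))
            ∘ (snocFun (A := A) (n + 1)))
          = (fun ω : Fin (n + 2) → A => (ω k.castSucc, ω k.succ)) ∘ Prod.fst := by
        funext p
        simp only [Function.comp, snocFun, Fin.succ_castSucc, Fin.snoc_castSucc]
      rw [hcomp, ← Measure.map_map ((measurable_pi_apply _).prodMk (measurable_pi_apply _))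
        measurable_fst]
      rw [show ((mchain μ K (n + 1) ⊗ₘ K.comap (fun ω : Fin (n + 2) → A => ω (Fin.last (n + 1)))
          (measurable_pi_apply _)).map Prod.fst)
          = (mchain μ K (n + 1) ⊗ₘ K.comap (fun ω : Fin (n + 2) → A => ω (Fin.last (n + 1)))
          (measurable_pi_apply _)).fst from rfl]
      rw [Measure.fst_compProd]
      exact ih k

lemma mchain_map_pair' (μ : Measure A) [IsProbabilityMeasure μ] (K : Kernel A A)
    [IsMarkovKernel K] (hinv : μ.bind K = μ) :
    ∀ (n : ℕ) (j : Fin n),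
      (mchain μ K n).map (fun ω => (ω j.castSucc, ω j.succ)) = μ ⊗ₘ K := by
  intro n j
  cases n with
  | zero => exact j.elim0
  | succ m => exact mchain_map_pair μ K hinv m j

end ChainAux

open ProbabilityTheory

/-- Proposition 3.7, claim 1: if `F ⊆ P_{a1⊕a2}(X1 × X2)` is totally
`C`-cyclically monotone, then every `π ∈ F` is a `c`-optimal coupling between its marginals. -/
theorem totallyCCyclMono_optimal
    (c : X1 × X2 → ℝ≥0∞) (hc : LowerSemicontinuous c)
    (a1 : X1 → ℝ≥0∞) (a2 : X2 → ℝ≥0∞) (ha1 : Measurable a1) (ha2 : Measurable a2)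
    (hdom : ∀ x1 x2, c (x1, x2) ≤ a1 x1 + a2 x2)
    (F : Set (ProbabilityMeasure (X1 × X2))) (hF : F ⊆ PaPair a1 a2)
    (hmono : TotallyCCyclMono c F) :
    ∀ π ∈ F, transportCost c π = OTCost c (margFst π) (margSnd π) := by
  intro π hπ
  have hcm : Measurable c := hc.measurable
  have hne : Nonempty (X1 × X2) := by
    by_contra h
    rw [not_nonempty_iff] at h
    have h1 : (π : Measure (X1 × X2)) Set.univ = 1 := measure_univ
    rw [Set.univ_eq_empty_iff.mpr h, measure_empty] at h1
    exact zero_ne_one h1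
  have hne1 : Nonempty X1 := ⟨hne.some.1⟩
  have hne2 : Nonempty X2 := ⟨hne.some.2⟩
  have hm1 : ((margFst π : ProbabilityMeasure X1) : Measure X1)
      = (π : Measure (X1 × X2)).map Prod.fst := π.toMeasure_map _
  have hm2 : ((margSnd π : ProbabilityMeasure X2) : Measure X2)
      = (π : Measure (X1 × X2)).map Prod.snd := π.toMeasure_map _
  have hπC : π ∈ Coupling (margFst π) (margSnd π) := ⟨hm1.symm, hm2.symm⟩
  rw [OTCost]
  refine le_antisymm (le_iInf₂ fun γ hγ => ?_) (iInf₂_le π hπC)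
  -- main part : `∫ c dπ ≤ ∫ c dγ` for every coupling `γ` of the marginals of `π`.
  haveI : IsProbabilityMeasure ((π : Measure (X1 × X2)).map Prod.swap) :=
    Measure.isProbabilityMeasure_map measurable_swap.aemeasurable
  set η : Kernel X1 X2 := (γ : Measure (X1 × X2)).condKernel with hη
  set lam : Kernel X2 X1 := ((π : Measure (X1 × X2)).map Prod.swap).condKernel with hlam
  set J : Kernel X2 (X1 × X2) := lam ×ₖ Kernel.id with hJ
  set Kst : Kernel X1 (X1 × X2) := J ∘ₖ η with hKst
  set K : Kernel (X1 × X2) (X1 × X2) := Kst.comap Prod.fst measurable_fst with hK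
  have hγ1 : (γ : Measure (X1 × X2)).map Prod.fst = (π : Measure (X1 × X2)).map Prod.fst :=
    hγ.1.trans hm1
  have hγ2 : (γ : Measure (X1 × X2)).map Prod.snd = (π : Measure (X1 × X2)).map Prod.snd :=
    hγ.2.trans hm2
  have hγdis : ((π : Measure (X1 × X2)).map Prod.fst) ⊗ₘ η = (γ : Measure (X1 × X2)) := by
    have h := Measure.disintegrate (γ : Measure (X1 × X2)) η
    rwa [show (γ : Measure (X1 × X2)).fst = (π : Measure (X1 × X2)).map Prod.fst from hγ1] at h
  have hπdis : ((π : Measure (X1 × X2)).map Prod.snd) ⊗ₘ lam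
      = (π : Measure (X1 × X2)).map Prod.swap := by
    have h := Measure.disintegrate ((π : Measure (X1 × X2)).map Prod.swap) lam
    have hfst : ((π : Measure (X1 × X2)).map Prod.swap).fst
        = (π : Measure (X1 × X2)).map Prod.snd := by
      show (((π : Measure (X1 × X2))).map Prod.swap).map Prod.fst = _
      rw [Measure.map_map measurable_fst measurable_swap]
      rfl
    rwa [hfst] at h
  have hbindη : ((π : Measure (X1 × X2)).map Prod.fst).bind η
      = (π : Measure (X1 × X2)).map Prod.snd := by
    ext s hs
    rw [Measure.bind_apply hs (Kernel.measurable η).aemeasurable]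
    have h1 : (((π : Measure (X1 × X2)).map Prod.fst) ⊗ₘ η) (Prod.snd ⁻¹' s)
        = ∫⁻ x, η x s ∂((π : Measure (X1 × X2)).map Prod.fst) := by
      rw [Measure.compProd_apply (hs.preimage measurable_snd)]
      rfl
    rw [← h1, hγdis, ← Measure.map_apply measurable_snd hs, hγ2]
  have hJap : ∀ (y : X2) (s : Set (X1 × X2)), MeasurableSet s →
      J y s = lam y {x' | (x', y) ∈ s} := by
    intro y s hs
    rw [hJ, Kernel.prod_apply, Kernel.id_apply, Measure.prod_apply hs]
    have e : ∀ x', Measure.dirac y (Prod.mk x' ⁻¹' s)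
        = Set.indicator {x' : X1 | (x', y) ∈ s} (1 : X1 → ℝ≥0∞) x' := by
      intro x'
      rw [Measure.dirac_apply' _ (hs.preimage measurable_prodMk_left)]
      by_cases hxy : (x', y) ∈ s
      · simp [Set.indicator_of_mem, hxy]
      · simp [hxy]
    have hTy : MeasurableSet {x' : X1 | (x', y) ∈ s} := hs.preimage measurable_prodMk_right
    rw [lintegral_congr e, lintegral_indicator_one hTy]
  have hinv : (π : Measure (X1 × X2)).bind K = (π : Measure (X1 × X2)) := by
    ext s hs
    rw [Measure.bind_apply hs (Kernel.measurable K).aemeasurable]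
    have e1 : ∀ z : X1 × X2, K z s = Kst z.1 s := fun z => by rw [hK, Kernel.comap_apply]
    rw [lintegral_congr e1,
      ← lintegral_map (Kernel.measurable_coe Kst hs) measurable_fst]
    have e2 : ∀ x, Kst x s = ∫⁻ y, lam y {x' | (x', y) ∈ s} ∂(η x) := by
      intro x
      rw [hKst, Kernel.comp_apply' _ _ _ hs]
      exact lintegral_congr fun y => hJap y s hs
    rw [lintegral_congr e2]
    have hgmeas : Measurable fun y => lam y {x' | (x', y) ∈ s} :=
      Kernel.measurable_kernel_prodMk_left (hs.preimage measurable_swap)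
    rw [← Measure.lintegral_bind (Kernel.measurable η).aemeasurable hgmeas.aemeasurable, hbindη]
    have e3 : (∫⁻ y, lam y {x' | (x', y) ∈ s} ∂((π : Measure (X1 × X2)).map Prod.snd))
        = (((π : Measure (X1 × X2)).map Prod.snd) ⊗ₘ lam) (Prod.swap ⁻¹' s) := by
      rw [Measure.compProd_apply (hs.preimage measurable_swap)]
      rfl
    rw [e3, hπdis, Measure.map_apply measurable_swap (hs.preimage measurable_swap)]
    congr 1
  have hcross : ((π : Measure (X1 × X2)) ⊗ₘ K).map
      (fun p : (X1 × X2) × (X1 × X2) => (p.1.1, p.2.2)) = (γ : Measure (X1 × X2)) := by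
    have hg : Measurable fun p : (X1 × X2) × (X1 × X2) => (p.1.1, p.2.2) :=
      (measurable_fst.comp measurable_fst).prodMk (measurable_snd.comp measurable_snd)
    ext s hs
    rw [Measure.map_apply hg hs, Measure.compProd_apply (hs.preimage hg)]
    have e1 : ∀ z : X1 × X2,
        K z (Prod.mk z ⁻¹' ((fun p : (X1 × X2) × (X1 × X2) => (p.1.1, p.2.2)) ⁻¹' s))
        = η z.1 (Prod.mk z.1 ⁻¹' s) := by
      intro z
      have hBz : MeasurableSet {w : X1 × X2 | (z.1, w.2) ∈ s} :=
        hs.preimage (measurable_const.prodMk measurable_snd)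
      rw [hK, Kernel.comap_apply]
      have hset : (Prod.mk z ⁻¹' ((fun p : (X1 × X2) × (X1 × X2) => (p.1.1, p.2.2)) ⁻¹' s))
          = {w : X1 × X2 | (z.1, w.2) ∈ s} := rfl
      rw [hset, hKst, Kernel.comp_apply' _ _ _ hBz]
      have e2 : ∀ y : X2, J y {w : X1 × X2 | (z.1, w.2) ∈ s}
          = Set.indicator (Prod.mk z.1 ⁻¹' s) (1 : X2 → ℝ≥0∞) y := by
        intro y
        have hrect : {w : X1 × X2 | (z.1, w.2) ∈ s} = Set.univ ×ˢ (Prod.mk z.1 ⁻¹' s) := by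
          ext w
          simp [Set.mem_prod]
        rw [hJ, Kernel.prod_apply, Kernel.id_apply, hrect, Measure.prod_prod, measure_univ,
          one_mul, Measure.dirac_apply' _ (hs.preimage measurable_prodMk_left)]
      rw [lintegral_congr e2, lintegral_indicator_one (hs.preimage measurable_prodMk_left)]
    rw [lintegral_congr e1,
      ← lintegral_map (Kernel.measurable_kernel_prodMk_left hs) measurable_fst,
      ← Measure.compProd_apply hs, hγdis]
  -- moments
  have hA1 : (∫⁻ x, a1 x ∂((π : Measure (X1 × X2)).map Prod.fst)) ≠ ⊤ := by
    have h := (hF hπ).1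
    rwa [Pa, Set.mem_setOf_eq, hm1] at h
  have hA2 : (∫⁻ y, a2 y ∂((π : Measure (X1 × X2)).map Prod.snd)) ≠ ⊤ := by
    have h := (hF hπ).2
    rwa [Pa, Set.mem_setOf_eq, hm2] at h
  -- the key chain inequality
  have key : ∀ n : ℕ, ((n + 1 : ℕ) : ℝ≥0∞) * transportCost c π
      ≤ (n : ℝ≥0∞) * transportCost c γ
        + ((∫⁻ x, a1 x ∂((π : Measure (X1 × X2)).map Prod.fst))
          + (∫⁻ y, a2 y ∂((π : Measure (X1 × X2)).map Prod.snd))) := by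
    intro n
    set θm : Measure (Fin (n + 1) → X1 × X2) := mchain (π : Measure (X1 × X2)) K n with hθm
    haveI : IsProbabilityMeasure θm := mchain_isProbabilityMeasure _ _ n
    set θ : ProbabilityMeasure (Fin (n + 1) → X1 × X2) := ⟨θm, inferInstance⟩ with hθ
    have hmarg : ∀ i : Fin (n + 1), θm.map (fun ω => ω i) = (π : Measure (X1 × X2)) :=
      fun i => mchain_map_eval _ K hinv n i
    have hmem : ∀ i : Fin (n + 1), θ.map (measurable_pi_apply i).aemeasurable ∈ F := by
      intro i
      have h1 : ((θ.map (measurable_pi_apply i).aemeasurable : ProbabilityMeasure (X1 × X2))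
          : Measure (X1 × X2)) = θm.map (fun ω => ω i) := θ.toMeasure_map _
      have : θ.map (measurable_pi_apply i).aemeasurable = π :=
        Subtype.ext (h1.trans (hmarg i))
      rw [this]
      exact hπ
    have hineq := hmono (n + 1) (by omega) θ hmem (Equiv.addRight 1)
    have hLmeas : ∀ i : Fin (n + 1), Measurable fun ω : Fin (n + 1) → X1 × X2 => c (ω i) :=
      fun i => hcm.comp (measurable_pi_apply i)
    have hL : (∫⁻ ω, ∑ i, c (ω i) ∂θm) = ((n + 1 : ℕ) : ℝ≥0∞) * transportCost c π := by
      rw [lintegral_finset_sum _ (fun i _ => hLmeas i)]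
      have e : ∀ i : Fin (n + 1), (∫⁻ ω, c (ω i) ∂θm) = transportCost c π := by
        intro i
        rw [← lintegral_map hcm (measurable_pi_apply i), hmarg i]
        rfl
      rw [Finset.sum_congr rfl (fun i _ => e i)]
      simp [Finset.sum_const, Finset.card_univ, nsmul_eq_mul]
    have hg : Measurable fun p : (X1 × X2) × (X1 × X2) => (p.1.1, p.2.2) :=
      (measurable_fst.comp measurable_fst).prodMk (measurable_snd.comp measurable_snd)
    have hRmeas : ∀ i : Fin (n + 1), Measurable fun ω : Fin (n + 1) → X1 × X2 =>
        c ((ω i).1, (ω (Equiv.addRight (1 : Fin (n + 1)) i)).2) := fun i =>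
      hcm.comp ((measurable_fst.comp (measurable_pi_apply i)).prodMk
        (measurable_snd.comp (measurable_pi_apply _)))
    have hterm1 : ∀ j : Fin n,
        (∫⁻ ω, c ((ω j.castSucc).1, (ω (Equiv.addRight (1 : Fin (n + 1)) j.castSucc)).2) ∂θm)
          = transportCost c γ := by
      intro j
      have hσ : (Equiv.addRight (1 : Fin (n + 1))) j.castSucc = j.succ := by
        simp [Equiv.coe_addRight, Fin.coeSucc_eq_succ]
      rw [hσ]
      have hpm : Measurable fun ω : Fin (n + 1) → X1 × X2 => (ω j.castSucc, ω j.succ) :=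
        (measurable_pi_apply _).prodMk (measurable_pi_apply _)
      calc (∫⁻ ω, c ((ω j.castSucc).1, (ω j.succ).2) ∂θm)
          = ∫⁻ p, c (p.1.1, p.2.2) ∂(θm.map (fun ω => (ω j.castSucc, ω j.succ))) :=
            (lintegral_map (hcm.comp hg) hpm).symm
        _ = ∫⁻ p, c (p.1.1, p.2.2) ∂((π : Measure (X1 × X2)) ⊗ₘ K) := by
            rw [hθm, mchain_map_pair' _ K hinv n j]
        _ = ∫⁻ z, c z ∂(((π : Measure (X1 × X2)) ⊗ₘ K).map
              (fun p : (X1 × X2) × (X1 × X2) => (p.1.1, p.2.2))) :=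
            (lintegral_map hcm hg).symm
        _ = transportCost c γ := by rw [hcross]; rfl
    have hterm2 :
        (∫⁻ ω, c ((ω (Fin.last n)).1,
            (ω (Equiv.addRight (1 : Fin (n + 1)) (Fin.last n))).2) ∂θm)
          ≤ (∫⁻ x, a1 x ∂((π : Measure (X1 × X2)).map Prod.fst))
            + (∫⁻ y, a2 y ∂((π : Measure (X1 × X2)).map Prod.snd)) := by
      have hσ : (Equiv.addRight (1 : Fin (n + 1))) (Fin.last n) = 0 := by
        simp [Equiv.coe_addRight]
      rw [hσ]
      calc (∫⁻ ω, c ((ω (Fin.last n)).1, (ω 0).2) ∂θm)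
          ≤ ∫⁻ ω, (a1 (ω (Fin.last n)).1 + a2 (ω 0).2) ∂θm :=
            lintegral_mono fun ω => hdom _ _
        _ = (∫⁻ ω, a1 (ω (Fin.last n)).1 ∂θm) + ∫⁻ ω, a2 (ω 0).2 ∂θm :=
            lintegral_add_left (ha1.comp (measurable_fst.comp (measurable_pi_apply _))) _
        _ = (∫⁻ x, a1 x ∂((π : Measure (X1 × X2)).map Prod.fst))
            + (∫⁻ y, a2 y ∂((π : Measure (X1 × X2)).map Prod.snd)) := by
            congr 1
            · have e1 : (∫⁻ z, a1 z.1
                  ∂(θm.map (fun ω : Fin (n + 1) → X1 × X2 => ω (Fin.last n))))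
                  = ∫⁻ ω, a1 (ω (Fin.last n)).1 ∂θm :=
                lintegral_map (ha1.comp measurable_fst) (measurable_pi_apply _)
              rw [← e1, hmarg (Fin.last n)]
              exact (lintegral_map ha1 measurable_fst).symm
            · have e1 : (∫⁻ z, a2 z.2
                  ∂(θm.map (fun ω : Fin (n + 1) → X1 × X2 => ω 0)))
                  = ∫⁻ ω, a2 (ω 0).2 ∂θm :=
                lintegral_map (ha2.comp measurable_snd) (measurable_pi_apply _)
              rw [← e1, hmarg 0]
              exact (lintegral_map ha2 measurable_snd).symm
    calc ((n + 1 : ℕ) : ℝ≥0∞) * transportCost c π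
        = ∫⁻ ω, ∑ i, c (ω i) ∂θm := hL.symm
      _ ≤ ∫⁻ ω, ∑ i, c ((ω i).1, (ω (Equiv.addRight (1 : Fin (n + 1)) i)).2) ∂θm := hineq
      _ = ∑ i : Fin (n + 1),
            ∫⁻ ω, c ((ω i).1, (ω (Equiv.addRight (1 : Fin (n + 1)) i)).2) ∂θm :=
          lintegral_finset_sum _ (fun i _ => hRmeas i)
      _ = (∑ j : Fin n,
            ∫⁻ ω, c ((ω j.castSucc).1, (ω (Equiv.addRight (1 : Fin (n + 1)) j.castSucc)).2) ∂θm)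
          + ∫⁻ ω, c ((ω (Fin.last n)).1,
              (ω (Equiv.addRight (1 : Fin (n + 1)) (Fin.last n))).2) ∂θm :=
          Fin.sum_univ_castSucc _
      _ ≤ (n : ℝ≥0∞) * transportCost c γ
          + ((∫⁻ x, a1 x ∂((π : Measure (X1 × X2)).map Prod.fst))
            + (∫⁻ y, a2 y ∂((π : Measure (X1 × X2)).map Prod.snd))) := by
          refine add_le_add (le_of_eq ?_) hterm2
          rw [Finset.sum_congr rfl (fun j _ => hterm1 j)]
          simp [Finset.sum_const, Finset.card_univ, nsmul_eq_mul]
  -- pass to the limit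
  set Am := (∫⁻ x, a1 x ∂((π : Measure (X1 × X2)).map Prod.fst))
    + (∫⁻ y, a2 y ∂((π : Measure (X1 × X2)).map Prod.snd)) with hAm
  have hAne : Am ≠ ⊤ := ENNReal.add_ne_top.2 ⟨hA1, hA2⟩
  refine ENNReal.le_of_forall_pos_le_add fun ε hε hGfin => ?_
  have hεne : (ε : ℝ≥0∞) ≠ 0 := by
    simpa using hε.ne'
  obtain ⟨n, hn⟩ := ENNReal.exists_nat_gt (ENNReal.div_lt_top hAne hεne).ne
  have hkey := key n
  have hnc0 : ((n + 1 : ℕ) : ℝ≥0∞) ≠ 0 := by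
    exact_mod_cast Nat.succ_ne_zero n
  have hnct : ((n + 1 : ℕ) : ℝ≥0∞) ≠ ⊤ := ENNReal.natCast_ne_top _
  have cancel : ∀ x : ℝ≥0∞, ((n + 1 : ℕ) : ℝ≥0∞) * x / ((n + 1 : ℕ) : ℝ≥0∞) = x := by
    intro x
    rw [mul_comm, mul_div_assoc, ENNReal.div_self hnc0 hnct, mul_one]
  have h1 : ((n + 1 : ℕ) : ℝ≥0∞) * transportCost c π
      ≤ ((n + 1 : ℕ) : ℝ≥0∞) * transportCost c γ + Am := by
    refine hkey.trans (add_le_add_left (mul_le_mul_left ?_ _) _)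
    exact_mod_cast Nat.le_succ n
  have hdiv : transportCost c π ≤ transportCost c γ + Am / ((n + 1 : ℕ) : ℝ≥0∞) := by
    calc transportCost c π
        = ((n + 1 : ℕ) : ℝ≥0∞) * transportCost c π / ((n + 1 : ℕ) : ℝ≥0∞) := by
          rw [cancel]
      _ ≤ (((n + 1 : ℕ) : ℝ≥0∞) * transportCost c γ + Am) / ((n + 1 : ℕ) : ℝ≥0∞) :=
          ENNReal.div_le_div_right h1 _
      _ = transportCost c γ + Am / ((n + 1 : ℕ) : ℝ≥0∞) := by
          rw [ENNReal.add_div, cancel]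
  refine hdiv.trans (add_le_add_right ?_ _)
  have h2 : Am ≤ ((n + 1 : ℕ) : ℝ≥0∞) * ε := by
    have h3 : Am / (ε : ℝ≥0∞) ≤ ((n + 1 : ℕ) : ℝ≥0∞) := by
      refine hn.le.trans ?_
      exact_mod_cast Nat.le_succ n
    calc Am = Am / (ε : ℝ≥0∞) * (ε : ℝ≥0∞) :=
          (ENNReal.div_mul_cancel hεne ENNReal.coe_ne_top).symm
      _ ≤ ((n + 1 : ℕ) : ℝ≥0∞) * ε := mul_le_mul_left h3 _
  calc Am / ((n + 1 : ℕ) : ℝ≥0∞)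
      ≤ (((n + 1 : ℕ) : ℝ≥0∞) * ε) / ((n + 1 : ℕ) : ℝ≥0∞) := ENNReal.div_le_div_right h2 _
    _ = (ε : ℝ≥0∞) := by rw [cancel]

end OTRM
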